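/- For a 1-uniform fusion frame {(W_i, 1)}: {(W_i,1)} is a Riesz decomposition of H if and only if the synthesis operator T_W is one-to-one, if and only if the analysis operator T_W* is onto, if and only if {(W_i,1)} is a fusion Riesz basis for H. -/

import Mathlib

open scoped InnerProductSpace
open scoped ENNReal
set_option synthInstance.maxHeartbeats 1000000
set_option maxHeartbeats 1000000

/-- Orthogonal projection onto a complete subspace, as an operator `H →L H`. -/
noncomputable def fusionProj {H : Type*} [NormedAddCommGroup H] [InnerProductSpace ℂ H]
    (K : Submodule ℂ H) [CompleteSpace K] : H →L[ℂ] H :=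
  K.subtypeL.comp K.orthogonalProjectionOnto

/-- Fusion Riesz basis (for weight one): dense span and two-sided Riesz inequalities
for all finite sums with `f j ∈ W j`. -/
def IsFusionRieszBasis {H : Type*} [NormedAddCommGroup H] [InnerProductSpace ℂ H]
    {ι : Type*} (W : ι → Submodule ℂ H) : Prop :=
  (⨆ i, W i).topologicalClosure = ⊤ ∧
  ∃ C D : ℝ, 0 < C ∧ C ≤ D ∧
    ∀ (J : Finset ι) (f : ι → H), (∀ j, f j ∈ W j) →
      C * Real.sqrt (∑ j ∈ J, ‖f j‖ ^ 2) ≤ ‖∑ j ∈ J, f j‖ ∧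
        ‖∑ j ∈ J, f j‖ ≤ D * Real.sqrt (∑ j ∈ J, ‖f j‖ ^ 2)

lemma lp_norm_sq {ι : Type*} {G : ι → Type*} [∀ i, NormedAddCommGroup (G i)]
    (g : lp G 2) : ‖g‖ ^ 2 = ∑' i, ‖g i‖ ^ 2 := by
  have h := lp.norm_rpow_eq_tsum (p := 2) (by norm_num) g
  have h2 : ((2 : ℝ≥0∞).toReal) = (2 : ℝ) := by norm_num
  rw [h2] at h
  calc ‖g‖ ^ 2 = ‖g‖ ^ (2:ℝ) := by
        rw [← Real.rpow_natCast ‖g‖ 2]; norm_num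
    _ = ∑' i, ‖g i‖ ^ (2:ℝ) := h
    _ = ∑' i, ‖g i‖ ^ 2 := by
        congr 1; funext i; rw [← Real.rpow_natCast ‖g i‖ 2]; norm_num

lemma riesz_sum_zero {H : Type*} [NormedAddCommGroup H] [InnerProductSpace ℂ H]
    {ι : Type*} {W : ι → Submodule ℂ H} {C : ℝ} (hC : 0 < C)
    (hRiesz : ∀ (J : Finset ι) (f : ι → H), (∀ j, f j ∈ W j) →
      C * Real.sqrt (∑ j ∈ J, ‖f j‖ ^ 2) ≤ ‖∑ j ∈ J, f j‖)
    (h : ι → H) (hmem : ∀ i, h i ∈ W i) (hsum : HasSum h 0) : ∀ j, h j = 0 := by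
  classical
  intro j
  have key : ∀ ε : ℝ, 0 < ε → ‖h j‖ ^ 2 ≤ 0 + ε := by
    intro ε hε
    have hδ : 0 < C * Real.sqrt ε := mul_pos hC (Real.sqrt_pos.2 hε)
    have hev : ∀ᶠ s : Finset ι in Filter.atTop,
        (∑ i ∈ s, h i) ∈ Metric.ball (0 : H) (C * Real.sqrt ε) :=
      hsum (Metric.ball_mem_nhds 0 hδ)
    obtain ⟨S, hS⟩ := Filter.eventually_atTop.1 hev
    have hJ := hS (insert j S) (Finset.subset_insert j S)
    rw [Metric.mem_ball, dist_zero_right] at hJ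
    have h1 := hRiesz (insert j S) h hmem
    have h2 : Real.sqrt (∑ i ∈ insert j S, ‖h i‖ ^ 2) < Real.sqrt ε := by
      have := h1.trans_lt hJ
      exact lt_of_mul_lt_mul_left this hC.le
    have h3 : (∑ i ∈ insert j S, ‖h i‖ ^ 2) < ε := by
      have hnn : (0:ℝ) ≤ ∑ i ∈ insert j S, ‖h i‖ ^ 2 :=
        Finset.sum_nonneg fun i _ => sq_nonneg _
      nlinarith [Real.sq_sqrt hnn, Real.sqrt_nonneg ε, Real.sq_sqrt hε.le,
        Real.sqrt_nonneg (∑ i ∈ insert j S, ‖h i‖ ^ 2)]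
    have h4 : ‖h j‖ ^ 2 ≤ ∑ i ∈ insert j S, ‖h i‖ ^ 2 :=
      Finset.single_le_sum (fun i _ => sq_nonneg ‖h i‖) (Finset.mem_insert_self j S)
    linarith
  have := le_of_forall_pos_le_add key
  have hn : ‖h j‖ = 0 := by nlinarith [sq_nonneg ‖h j‖, norm_nonneg (h j)]
  exact norm_eq_zero.1 hn

section Aux
variable {H : Type*} [NormedAddCommGroup H] [InnerProductSpace ℂ H] [CompleteSpace H]
  {ι : Type*} {W : ι → Submodule ℂ H} [∀ i, CompleteSpace (W i)]
  (T : lp (fun i => ↥(W i)) 2 →L[ℂ] H)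
  (hT : ∀ v : lp (fun i => ↥(W i)) 2, HasSum (fun i => (v i : H)) (T v))

set_option linter.unusedSectionVars false

include hT in
lemma T_single [DecidableEq ι] (i : ι) (a : W i) : T (lp.single 2 i a) = (a : H) := by
  refine (hT (lp.single 2 i a)).unique ?_
  have : (fun j => ((lp.single 2 i a : lp (fun i => ↥(W i)) 2) j : H)) =
      fun j => if j = i then (a : H) else 0 := by
    funext j
    rw [lp.single_apply]
    split_ifs with hji
    · subst hji; simp
    · simp [Pi.single_apply, hji]
  rw [this]
  exact hasSum_ite_eq i (a : H)

include hT in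
lemma adj_coord [DecidableEq ι] (f : H) (i : ι) :
    ((ContinuousLinearMap.adjoint T f) i : H) = fusionProj (W i) f := by
  have key : ∀ a : W i, ⟪((ContinuousLinearMap.adjoint T f) i : H), (a : H)⟫_ℂ
      = ⟪f, (a : H)⟫_ℂ := by
    intro a
    have h1 := (lp.inner_single_right (𝕜 := ℂ) (G := fun i => ↥(W i)) i a
      (ContinuousLinearMap.adjoint T f)).symm
    have h2 : ⟪ContinuousLinearMap.adjoint T f, lp.single 2 i a⟫_ℂ
        = ⟪f, T (lp.single 2 i a)⟫_ℂ :=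
      ContinuousLinearMap.adjoint_inner_left T _ f
    rw [← Submodule.coe_inner, h1, h2, T_single T hT]
  have := Submodule.eq_starProjection_of_mem_of_inner_eq_zero (K := W i) (u := f)
    ((ContinuousLinearMap.adjoint T f) i).2 ?_
  · exact this.symm
  · intro w hw
    have := key ⟨w, hw⟩
    rw [inner_sub_left]
    simp only [Submodule.coe_mk] at this ⊢
    rw [this]
    ring

include hT in
lemma adj_norm_sq (f : H) :
    ‖ContinuousLinearMap.adjoint T f‖ ^ 2 = ∑' i, ‖fusionProj (W i) f‖ ^ 2 := by
  classical
  rw [lp_norm_sq]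
  congr 1
  funext i
  rw [← adj_coord T hT f i]
  rfl

end Aux
/-- For a 1-uniform fusion frame `{(W i, 1)}` the following are equivalent:
it is a Riesz decomposition of `H`; the synthesis operator `T_W` is injective;
the analysis operator `T_W*` is surjective; it is a fusion Riesz basis for `H`. -/
theorem fusion_riesz_basis_characterizations
    {H : Type*} [NormedAddCommGroup H] [InnerProductSpace ℂ H] [CompleteSpace H]
    {ι : Type*} (W : ι → Submodule ℂ H) [∀ i, CompleteSpace (W i)]
    (A B : ℝ) (hA : 0 < A) (hAB : A ≤ B)
    (hframe : ∀ f : H,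
      A * ‖f‖ ^ 2 ≤ ∑' i, ‖fusionProj (W i) f‖ ^ 2 ∧
        ∑' i, ‖fusionProj (W i) f‖ ^ 2 ≤ B * ‖f‖ ^ 2)
    (T : lp (fun i => ↥(W i)) 2 →L[ℂ] H)
    (hT : ∀ v : lp (fun i => ↥(W i)) 2, HasSum (fun i => (v i : H)) (T v)) :
    ((∀ f : H, ∃! g : ∀ i, ↥(W i), HasSum (fun i => (g i : H)) f) ↔
        Function.Injective T) ∧
    (Function.Injective T ↔ Function.Surjective (ContinuousLinearMap.adjoint T)) ∧
    (Function.Surjective (ContinuousLinearMap.adjoint T) ↔ IsFusionRieszBasis W) := by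
  classical
  set Tadj := ContinuousLinearMap.adjoint T with hTadjdef
  have hsA : 0 < Real.sqrt A := Real.sqrt_pos.2 hA
  have hnormsq : ∀ f : H, ‖Tadj f‖ ^ 2 = ∑' i, ‖fusionProj (W i) f‖ ^ 2 :=
    fun f => adj_norm_sq T hT f
  have hlowsq : ∀ f : H, A * ‖f‖ ^ 2 ≤ ‖Tadj f‖ ^ 2 := by
    intro f; rw [hnormsq f]; exact (hframe f).1
  have hupsq : ∀ f : H, ‖Tadj f‖ ^ 2 ≤ B * ‖f‖ ^ 2 := by
    intro f; rw [hnormsq f]; exact (hframe f).2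
  have hlow : ∀ f : H, Real.sqrt A * ‖f‖ ≤ ‖Tadj f‖ := by
    intro f
    have h := Real.sqrt_le_sqrt (hlowsq f)
    rwa [Real.sqrt_mul hA.le, Real.sqrt_sq (norm_nonneg f), Real.sqrt_sq (norm_nonneg _)] at h
  have hup : ∀ f : H, ‖Tadj f‖ ≤ Real.sqrt B * ‖f‖ := by
    intro f
    have h := Real.sqrt_le_sqrt (hupsq f)
    rwa [Real.sqrt_mul (hA.trans_le hAB).le, Real.sqrt_sq (norm_nonneg f),
      Real.sqrt_sq (norm_nonneg _)] at h
  -- injectivity criterion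
  have inj_of_ker : ∀ (hker : ∀ v, T v = 0 → v = 0), Function.Injective T := by
    intro hker a b hab
    have : T (a - b) = 0 := by rw [map_sub, hab, sub_self]
    have := hker _ this
    exact sub_eq_zero.1 this
  -- closed range of the adjoint
  have hclosedAdj : IsClosed (Set.range Tadj) := by
    have hanti : AntilipschitzWith ((Real.sqrt A)⁻¹).toNNReal Tadj := by
      apply Tadj.antilipschitz_of_bound
      intro x
      rw [Real.coe_toNNReal _ (by positivity)]
      rw [inv_mul_eq_div, le_div_iff₀ hsA]
      have := hlow x; linarith [hlow x]
    exact hanti.isClosed_range Tadj.uniformContinuous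
  -- density of the span (always true, from the lower frame bound)
  have hdense : (⨆ i, W i).topologicalClosure = ⊤ := by
    rw [Submodule.topologicalClosure_eq_top_iff, Submodule.eq_bot_iff]
    intro f hfmem
    have hzero : ∀ i, fusionProj (W i) f = 0 := by
      intro i
      have hf_orth : f ∈ (W i)ᗮ := (Submodule.orthogonal_le (le_iSup W i)) hfmem
      simp [fusionProj,
        Submodule.orthogonalProjectionOnto_apply_of_mem_orthogonal hf_orth]
    have h1 := (hframe f).1
    simp only [hzero, norm_zero] at h1
    have h0 : ∑' _ : ι, ((0:ℝ) ^ 2) = 0 := by simp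
    rw [h0] at h1
    have h2 : ‖f‖ ^ 2 ≤ 0 := by nlinarith [sq_nonneg ‖f‖]
    have h3 : ‖f‖ ^ 2 = 0 := le_antisymm h2 (sq_nonneg _)
    exact norm_eq_zero.1 (sq_eq_zero_iff.1 h3)
  -- the four implications
  have pq : (∀ f : H, ∃! g : ∀ i, ↥(W i), HasSum (fun i => (g i : H)) f) →
      Function.Injective T := by
    intro hdec
    apply inj_of_ker
    intro v hv
    have h1 : HasSum (fun i => ((fun i => v i) i : H)) 0 := by
      have := hT v; rwa [hv] at this
    have h2 : HasSum (fun i => (((0 : ∀ i, ↥(W i)) i : H))) 0 := by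
      simpa using hasSum_zero
    have heq := (hdec 0).unique h1 h2
    apply lp.ext
    funext i
    exact congrFun heq i
  have qr : Function.Injective T → Function.Surjective Tadj := by
    intro hinjT
    set R : Submodule ℂ (lp (fun i => ↥(W i)) 2) := LinearMap.range (Tadj : H →ₗ[ℂ] lp (fun i => ↥(W i)) 2) with hR
    have hRclosed : IsClosed (R : Set (lp (fun i => ↥(W i)) 2)) := by
      simpa [hR, LinearMap.coe_range] using hclosedAdj
    haveI : CompleteSpace R := hRclosed.completeSpace_coe
    have hbot : Rᗮ = ⊥ := by
      rw [Submodule.eq_bot_iff]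
      intro v hv
      have hmem : Tadj (T v) ∈ R := LinearMap.mem_range.2 ⟨T v, rfl⟩
      have h0 : ⟪Tadj (T v), v⟫_ℂ = 0 := (Submodule.mem_orthogonal R v).1 hv _ hmem
      rw [hTadjdef, ContinuousLinearMap.adjoint_inner_left] at h0
      have hTv : T v = 0 := inner_self_eq_zero.1 h0
      apply hinjT
      rw [map_zero, hTv]
    have hRtop : R = ⊤ := Submodule.orthogonal_eq_bot_iff.1 hbot
    intro w
    have hw : w ∈ R := by rw [hRtop]; trivial
    exact LinearMap.mem_range.1 hw
  have rq : Function.Surjective Tadj → Function.Injective T := by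
    intro hsurj
    apply inj_of_ker
    intro v hv
    obtain ⟨f, hf⟩ := hsurj v
    have h0 : ⟪v, v⟫_ℂ = 0 := by
      calc ⟪v, v⟫_ℂ = ⟪Tadj f, v⟫_ℂ := by rw [hf]
        _ = ⟪f, T v⟫_ℂ := by rw [hTadjdef, ContinuousLinearMap.adjoint_inner_left]
        _ = 0 := by rw [hv, inner_zero_right]
    exact inner_self_eq_zero.1 h0
  have rs : Function.Surjective Tadj → IsFusionRieszBasis W := by
    intro hsurj
    have hTn : ‖T‖ ≤ Real.sqrt B := by
      have h1 : ‖Tadj‖ ≤ Real.sqrt B :=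
        ContinuousLinearMap.opNorm_le_bound _ (Real.sqrt_nonneg B) hup
      rwa [hTadjdef, LinearIsometryEquiv.norm_map] at h1
    have hTlow : ∀ v : lp (fun i => ↥(W i)) 2, Real.sqrt A * ‖v‖ ≤ ‖T v‖ := by
      intro v
      rcases eq_or_ne v 0 with rfl | hv0
      · simp
      obtain ⟨f, hf⟩ := hsurj v
      have h1 : ⟪f, T v⟫_ℂ = ⟪v, v⟫_ℂ := by
        rw [← ContinuousLinearMap.adjoint_inner_left, ← hTadjdef, hf]
      have h2 : ‖v‖ ^ 2 ≤ ‖f‖ * ‖T v‖ := by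
        have := norm_inner_le_norm (𝕜 := ℂ) f (T v)
        have hre : RCLike.re (⟪v, v⟫_ℂ) = ‖v‖ ^ 2 := inner_self_eq_norm_sq v
        have hre3 : ‖v‖ ^ 2 ≤ ‖⟪f, T v⟫_ℂ‖ := by
          rw [← hre, ← h1]; exact RCLike.re_le_norm _
        linarith
      have h3 : Real.sqrt A * ‖f‖ ≤ ‖v‖ := by
        have := hlow f; rwa [hf] at this
      have hvpos : 0 < ‖v‖ := norm_pos_iff.2 hv0
      nlinarith [norm_nonneg (T v), norm_nonneg f]
    refine ⟨hdense, Real.sqrt A, Real.sqrt B, hsA, Real.sqrt_le_sqrt hAB, ?_⟩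
    intro J f hf
    set a : ∀ i, ↥(W i) := fun i => ⟨f i, hf i⟩ with ha
    set v : lp (fun i => ↥(W i)) 2 := ∑ j ∈ J, lp.single 2 j (a j) with hvdef
    have hTv : T v = ∑ j ∈ J, f j := by
      rw [hvdef, map_sum]
      exact Finset.sum_congr rfl fun j _ => T_single T hT j (a j)
    have hcoord : ∀ i, (v i : H) = if i ∈ J then f i else 0 := by
      intro i
      have hv1 : v i = ∑ j ∈ J, (lp.single 2 j (a j) : lp (fun i => ↥(W i)) 2) i := by
        rw [hvdef]
        induction J using Finset.induction_on with
        | empty => simp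
        | insert hx ih => rename_i s hs; simp only [lp.coeFn_sum, Finset.sum_apply]
      rw [hv1]
      by_cases hiJ : i ∈ J
      · rw [Finset.sum_eq_single i
          (fun b _ hbi => lp.single_apply_ne (E := fun k => ↥(W k)) 2 b (a b) (Ne.symm hbi))
          (fun h => absurd hiJ h)]
        simp [lp.single_apply_self, hiJ, ha]
      · rw [if_neg hiJ, Finset.sum_eq_zero
          (fun b hb => lp.single_apply_ne (E := fun k => ↥(W k)) 2 b (a b)
            (fun h => hiJ (by rw [h]; exact hb)))]
        simp
    have hnv : ‖v‖ = Real.sqrt (∑ j ∈ J, ‖f j‖ ^ 2) := by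
      have h2 : ‖v‖ ^ 2 = ∑ j ∈ J, ‖f j‖ ^ 2 := by
        rw [lp_norm_sq]
        rw [tsum_eq_sum (s := J) ?_]
        · apply Finset.sum_congr rfl
          intro i hi
          have : ‖v i‖ = ‖(v i : H)‖ := rfl
          rw [this, hcoord i, if_pos hi]
        · intro i hi
          have : ‖v i‖ = ‖(v i : H)‖ := rfl
          rw [this, hcoord i, if_neg hi]
          simp
      rw [← h2, Real.sqrt_sq (norm_nonneg v)]
    constructor
    · rw [← hnv, ← hTv]; exact hTlow v
    · rw [← hnv, ← hTv]
      calc ‖T v‖ ≤ ‖T‖ * ‖v‖ := T.le_opNorm v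
        _ ≤ Real.sqrt B * ‖v‖ := by
            apply mul_le_mul_of_nonneg_right hTn (norm_nonneg v)
  have sp : IsFusionRieszBasis W →
      (∀ f : H, ∃! g : ∀ i, ↥(W i), HasSum (fun i => (g i : H)) f) := by
    rintro ⟨hdense', C, D, hC, hCD, hRieszBoth⟩
    have hRlow : ∀ (J : Finset ι) (f : ι → H), (∀ j, f j ∈ W j) →
        C * Real.sqrt (∑ j ∈ J, ‖f j‖ ^ 2) ≤ ‖∑ j ∈ J, f j‖ :=
      fun J f hf => (hRieszBoth J f hf).1
    have hTanti : ∀ v : lp (fun i => ↥(W i)) 2, C * ‖v‖ ≤ ‖T v‖ := by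
      intro v
      have htend1 : Filter.Tendsto (fun J : Finset ι => ∑ i ∈ J, (v i : H))
          Filter.atTop (nhds (T v)) := hT v
      have hsummable : Summable (fun i => ‖(v i : H)‖ ^ 2) := by
        have hs := (lp.memℓp v).summable (by norm_num : 0 < (2 : ℝ≥0∞).toReal)
        have heq2 : (fun i => ‖v i‖ ^ (2 : ℝ≥0∞).toReal) = fun i => ‖(v i : H)‖ ^ 2 := by
          funext i
          have h2 : ((2 : ℝ≥0∞).toReal) = (2 : ℝ) := by norm_num
          have h3 : ‖v i‖ ^ (2 : ℝ) = ‖v i‖ ^ (2 : ℕ) := by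
            rw [← Real.rpow_natCast ‖v i‖ 2]; norm_num
          rw [h2, h3]
          rfl
        rwa [heq2] at hs
      have hsumnorm : HasSum (fun i => ‖(v i : H)‖ ^ 2) (‖v‖ ^ 2) := by
        have := hsummable.hasSum
        have heq : ∑' i, ‖(v i : H)‖ ^ 2 = ‖v‖ ^ 2 := (lp_norm_sq v).symm
        rwa [heq] at this
      have htend2 : Filter.Tendsto
          (fun J : Finset ι => C * Real.sqrt (∑ i ∈ J, ‖(v i : H)‖ ^ 2))
          Filter.atTop (nhds (C * ‖v‖)) := by
        have h1 : Filter.Tendsto (fun J : Finset ι => ∑ i ∈ J, ‖(v i : H)‖ ^ 2)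
            Filter.atTop (nhds (‖v‖ ^ 2)) := hsumnorm
        have h2 := (Real.continuous_sqrt.tendsto (‖v‖ ^ 2)).comp h1
        rw [Real.sqrt_sq (norm_nonneg v)] at h2
        exact h2.const_mul C
      exact le_of_tendsto_of_tendsto' htend2 htend1.norm
        (fun J => hRlow J (fun i => (v i : H)) (fun i => (v i).2))
    have hTsurj : Function.Surjective T := by
      have hclosedT : IsClosed (Set.range T) := by
        have hanti : AntilipschitzWith (C⁻¹).toNNReal T := by
          apply T.antilipschitz_of_bound
          intro x
          rw [Real.coe_toNNReal _ (by positivity)]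
          rw [inv_mul_eq_div, le_div_iff₀ hC]
          linarith [hTanti x]
        exact hanti.isClosed_range T.uniformContinuous
      have hle : (⨆ i, W i) ≤ LinearMap.range (T : lp (fun i => ↥(W i)) 2 →ₗ[ℂ] H) := by
        refine iSup_le fun i w hw => ?_
        exact LinearMap.mem_range.2 ⟨lp.single 2 i ⟨w, hw⟩, T_single T hT i ⟨w, hw⟩⟩
      have hle2 : (⨆ i, W i).topologicalClosure ≤ LinearMap.range (T : lp (fun i => ↥(W i)) 2 →ₗ[ℂ] H) :=
        Submodule.topologicalClosure_minimal _ hle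
          (by simpa [LinearMap.coe_range] using hclosedT)
      rw [hdense'] at hle2
      intro w
      exact LinearMap.mem_range.1 (hle2 (Submodule.mem_top : w ∈ ⊤))
    intro f
    obtain ⟨v, hv⟩ := hTsurj f
    have hvf : HasSum (fun i => (v i : H)) f := by
      have := hT v; rwa [hv] at this
    refine ⟨fun i => v i, hvf, ?_⟩
    intro y hy
    have hdiff := riesz_sum_zero hC hRlow (fun i => (y i : H) - (v i : H))
      (fun i => sub_mem (y i).2 (v i).2) (by simpa using hy.sub hvf)
    funext i
    exact Subtype.ext (sub_eq_zero.1 (hdiff i))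
  exact ⟨⟨pq, fun h => sp (rs (qr h))⟩, ⟨qr, rq⟩, ⟨rs, fun h => qr (pq (sp h))⟩⟩
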